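/- A C¹ map f = (f₁,…,fₙ) : ℝⁿ → ℝⁿ is Laplacian (its Jacobian at every point is a symmetric matrix whose rows sum to zero) if and only if there exist g ∈ C²(ℝ^{n−1}) and a constant k ∈ ℝ such that f_i(x₁,…,xₙ) = ∂g/∂t_i (x₁ − xₙ, …, x_{n−1} − xₙ) for i = 1,…,n−1, and fₙ = −f₁ − ⋯ − f_{n−1} + k. -/

import Mathlib

open scoped BigOperators

/-- A C¹ map whose Jacobian at every point is a symmetric matrix each of whose rows sums
to zero (i.e. is a Laplacian matrix). -/
def IsLaplacianMap {n : ℕ} (f : (Fin n → ℝ) → Fin n → ℝ) : Prop :=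
  ContDiff ℝ 1 f ∧
    ∀ x : Fin n → ℝ,
      (∀ i j : Fin n,
        fderiv ℝ (fun y => f y i) x (Pi.single j 1) =
          fderiv ℝ (fun y => f y j) x (Pi.single i 1)) ∧
      (∀ i : Fin n, ∑ j : Fin n, fderiv ℝ (fun y => f y i) x (Pi.single j 1) = 0)

open MeasureTheory
noncomputable section
variable {n : ℕ}
def eCLM (n : ℕ) : (Fin n → ℝ) →L[ℝ] (Fin (n + 1) → ℝ) :=
  ContinuousLinearMap.pi (fun j => Fin.lastCases 0 (fun i => ContinuousLinearMap.proj i) j)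
def dCLM (n : ℕ) : (Fin (n + 1) → ℝ) →L[ℝ] (Fin n → ℝ) :=
  ContinuousLinearMap.pi
    (fun i => (ContinuousLinearMap.proj (R := ℝ) (φ := fun _ : Fin (n+1) => ℝ) i.castSucc) -
      ContinuousLinearMap.proj (Fin.last n))
def pairCLM (n : ℕ) : (Fin n → ℝ) →L[ℝ] ((Fin n → ℝ) →L[ℝ] ℝ) :=
  ∑ i : Fin n, (ContinuousLinearMap.proj i).smulRight (ContinuousLinearMap.proj i)
@[simp] lemma eCLM_castSucc (t : Fin n → ℝ) (i : Fin n) : eCLM n t i.castSucc = t i := by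
  simp [eCLM]
@[simp] lemma eCLM_last (t : Fin n → ℝ) : eCLM n t (Fin.last n) = 0 := by
  simp [eCLM]
@[simp] lemma dCLM_apply (x : Fin (n + 1) → ℝ) (i : Fin n) :
    dCLM n x i = x i.castSucc - x (Fin.last n) := by
  simp [dCLM]
lemma pairCLM_apply (v w : Fin n → ℝ) : pairCLM n v w = ∑ i, v i * w i := by
  simp [pairCLM, ContinuousLinearMap.sum_apply, mul_comm]
lemma clm_apply_eq_sum {F : Type*} [NormedAddCommGroup F] [NormedSpace ℝ F]
    (L : (Fin n → ℝ) →L[ℝ] F) (v : Fin n → ℝ) :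
    L v = ∑ i, v i • L (Pi.single i 1) := by
  conv_lhs => rw [← Finset.univ_sum_single v, map_sum]
  refine Finset.sum_congr rfl fun i _ => ?_
  rw [← _root_.map_smul]
  congr 1
  funext m
  by_cases h : m = i <;> simp [Pi.single_apply, h]
lemma clm_ext_basis {F : Type*} [NormedAddCommGroup F] [NormedSpace ℝ F]
    {L M : (Fin n → ℝ) →L[ℝ] F}
    (h : ∀ i, L (Pi.single i 1) = M (Pi.single i 1)) : L = M := by
  ext v
  rw [clm_apply_eq_sum L, clm_apply_eq_sum M]
  simp [h]
lemma eCLM_single (j : Fin n) : eCLM n (Pi.single j 1) = Pi.single j.castSucc 1 := by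
  funext m
  induction m using Fin.lastCases with
  | last => simp [Pi.single_apply, (Fin.castSucc_lt_last j).ne]
  | cast m => simp [Pi.single_apply, Fin.castSucc_inj]
lemma one_eq_sum_single {m : ℕ} : (fun _ : Fin m => (1:ℝ)) = ∑ j, Pi.single j 1 := by
  have := Finset.univ_sum_single (fun _ : Fin m => (1:ℝ))
  rw [← this]
@[simp] lemma pairCLM_single (v : Fin n → ℝ) (i : Fin n) :
    pairCLM n v (Pi.single i 1) = v i := by
  rw [pairCLM_apply]
  simp [Pi.single_apply]


lemma dCLM_single_castSucc (j : Fin n) :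
    dCLM n (Pi.single j.castSucc 1) = Pi.single j 1 := by
  funext m
  simp [Pi.single_apply, Fin.castSucc_inj, ((Fin.castSucc_lt_last m).ne' : Fin.last n ≠ m.castSucc).symm,
    (Fin.castSucc_lt_last j).ne]
lemma dCLM_single_last :
    dCLM n (Pi.single (Fin.last n) 1) = -fun _ => (1:ℝ) := by
  funext m
  simp [Pi.single_apply, (Fin.castSucc_lt_last m).ne]


set_option synthInstance.maxHeartbeats 100000 in
set_option maxHeartbeats 1000000 in
lemma forward (n : ℕ) (f : (Fin (n + 1) → ℝ) → Fin (n + 1) → ℝ)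
    (hf : ContDiff ℝ 1 f) (hL : IsLaplacianMap f) :
    ∃ (g : (Fin n → ℝ) → ℝ) (k : ℝ), ContDiff ℝ 2 g ∧
      (∀ (x : Fin (n + 1) → ℝ) (i : Fin n),
        f x i.castSucc =
          fderiv ℝ g (fun j : Fin n => x j.castSucc - x (Fin.last n)) (Pi.single i 1)) ∧
      (∀ x : Fin (n + 1) → ℝ,
        f x (Fin.last n) = -(∑ i : Fin n, f x i.castSucc) + k) := by
  obtain ⟨-, hL⟩ := hL
  have hsym : ∀ (x : Fin (n+1) → ℝ) (i j : Fin (n+1)),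
      fderiv ℝ (fun y => f y i) x (Pi.single j 1) =
        fderiv ℝ (fun y => f y j) x (Pi.single i 1) := fun x => (hL x).1
  have hrow : ∀ (x : Fin (n+1) → ℝ) (i : Fin (n+1)),
      ∑ j : Fin (n+1), fderiv ℝ (fun y => f y i) x (Pi.single j 1) = 0 := fun x => (hL x).2
  have hdiff : ∀ i : Fin (n+1), Differentiable ℝ (fun y => f y i) :=
    fun i => (contDiff_pi.mp hf i).differentiable one_ne_zero
  -- directional derivative along the all-ones vector vanishes
  have hone : ∀ (x : Fin (n+1) → ℝ) (i : Fin (n+1)),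
      fderiv ℝ (fun y => f y i) x (fun _ => (1:ℝ)) = 0 := by
    intro x i
    rw [one_eq_sum_single, map_sum]
    exact hrow x i
  -- invariance along the diagonal
  have hinv : ∀ (x : Fin (n+1) → ℝ) (i : Fin (n+1)),
      f x i = f (eCLM n (dCLM n x)) i := by
    intro x i
    have hψ : ∀ c : ℝ, HasDerivAt (fun c : ℝ => f (x + c • fun _ => (1:ℝ)) i) 0 c := by
      intro c
      have hγ : HasDerivAt (fun c : ℝ => x + c • (fun _ : Fin (n+1) => (1:ℝ)))
          (fun _ => (1:ℝ)) c := by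
        simpa using ((hasDerivAt_id c).smul_const (fun _ : Fin (n+1) => (1:ℝ))).const_add x
      have h2 := (hdiff i _).hasFDerivAt.comp_hasDerivAt c hγ
      rwa [hone] at h2
    have hconst := is_const_of_deriv_eq_zero
      (fun c => (hψ c).differentiableAt) (fun c => (hψ c).deriv)
    have h0 : f x i = f (x + (0:ℝ) • fun _ => (1:ℝ)) i := by simp
    have h1 : f (x + (-(x (Fin.last n))) • fun _ => (1:ℝ)) i = f (eCLM n (dCLM n x)) i := by
      congr 1
      funext m
      induction m using Fin.lastCases with
      | last => simp
      | cast m => simp [sub_eq_add_neg]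
    rw [h0, ← h1]
    exact hconst 0 (-(x (Fin.last n)))
  -- the total sum is constant
  have hsumD : ∀ x : Fin (n+1) → ℝ,
      HasFDerivAt (fun y => ∑ j : Fin (n+1), f y j)
        (∑ j : Fin (n+1), fderiv ℝ (fun y => f y j) x) x :=
    fun x => HasFDerivAt.fun_sum fun j _ => ((hdiff j) x).hasFDerivAt
  have hsum_const : ∀ x : Fin (n+1) → ℝ,
      ∑ j : Fin (n+1), f x j = ∑ j : Fin (n+1), f 0 j := by
    intro x
    refine is_const_of_fderiv_eq_zero (fun y => (hsumD y).differentiableAt) (fun y => ?_) x 0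
    rw [(hsumD y).fderiv]
    refine clm_ext_basis fun m => ?_
    rw [ContinuousLinearMap.sum_apply, ContinuousLinearMap.zero_apply]
    rw [Finset.sum_congr rfl fun j _ => hsym y j m]
    exact hrow y m
  -- the reduced map h
  set h : (Fin n → ℝ) → Fin n → ℝ := fun t i => f (eCLM n t) i.castSucc with hhdef
  have hh : ContDiff ℝ 1 h :=
    contDiff_pi.mpr fun i => (contDiff_pi.mp hf i.castSucc).comp (eCLM n).contDiff
  have hdh : Differentiable ℝ h := hh.differentiable one_ne_zero
  have hdhi : ∀ i, Differentiable ℝ (fun t => h t i) :=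
    fun i => (contDiff_pi.mp hh i).differentiable one_ne_zero
  have hfe : ∀ (x : Fin (n+1) → ℝ) (i : Fin n), f x i.castSucc = h (dCLM n x) i :=
    fun x i => hinv x i.castSucc
  -- partial derivatives of coordinates of h
  have hasF_hi : ∀ (i : Fin n) (t : Fin n → ℝ),
      HasFDerivAt (fun y => h y i)
        ((fderiv ℝ (fun y => f y i.castSucc) (eCLM n t)).comp (eCLM n)) t :=
    fun i t => ((hdiff i.castSucc) (eCLM n t)).hasFDerivAt.comp t (eCLM n).hasFDerivAt
  have Dh_single : ∀ (t : Fin n → ℝ) (i j : Fin n),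
      fderiv ℝ (fun y => h y i) t (Pi.single j 1) =
        fderiv ℝ (fun y => f y i.castSucc) (eCLM n t) (Pi.single j.castSucc 1) := by
    intro t i j
    rw [(hasF_hi i t).fderiv, ContinuousLinearMap.comp_apply, eCLM_single]
  have hsymh : ∀ (t : Fin n → ℝ) (i j : Fin n),
      fderiv ℝ (fun y => h y i) t (Pi.single j 1) =
        fderiv ℝ (fun y => h y j) t (Pi.single i 1) := by
    intro t i j
    rw [Dh_single, Dh_single]
    exact hsym (eCLM n t) i.castSucc j.castSucc
  -- coordinates of the full derivative of h
  have hfderiv_h_apply : ∀ (y v : Fin n → ℝ) (j : Fin n),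
      fderiv ℝ h y v j = fderiv ℝ (fun t => h t j) y v := by
    intro y v j
    have : fderiv ℝ h y = ContinuousLinearMap.pi (fun j => fderiv ℝ (fun t => h t j) y) := by
      exact fderiv_pi (fun j => hdhi j y)
    rw [this]
    rfl
  -- the potential function
  set μ : Measure ℝ := volume.restrict (Set.Ioc (0:ℝ) 1) with hμ
  set F : (Fin n → ℝ) → ℝ → ℝ := fun t s => pairCLM n (h (s • t)) t with hF
  set F' : (Fin n → ℝ) → ℝ → ((Fin n → ℝ) →L[ℝ] ℝ) := fun t s =>
    (pairCLM n (h (s • t))).comp (ContinuousLinearMap.id ℝ (Fin n → ℝ)) +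
      ((pairCLM n).comp
        ((fderiv ℝ h (s • t)).comp (s • ContinuousLinearMap.id ℝ (Fin n → ℝ)))).flip t
    with hF'
  set g : (Fin n → ℝ) → ℝ := fun t => ∫ s, F t s ∂μ with hg
  -- derivative of the integrand in t
  have hFt : ∀ (s : ℝ) (t : Fin n → ℝ), HasFDerivAt (fun u => F u s) (F' t s) t := by
    intro s t
    have hsm : HasFDerivAt (fun u : Fin n → ℝ => s • u)
        (s • ContinuousLinearMap.id ℝ (Fin n → ℝ)) t := (hasFDerivAt_id t).const_smul s
    have h2 : HasFDerivAt (fun u => h (s • u))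
        ((fderiv ℝ h (s • t)).comp (s • ContinuousLinearMap.id ℝ (Fin n → ℝ))) t :=
      (hdh (s • t)).hasFDerivAt.comp t hsm
    have hc : HasFDerivAt (fun u => pairCLM n (h (s • u)))
        ((pairCLM n).comp
          ((fderiv ℝ h (s • t)).comp (s • ContinuousLinearMap.id ℝ (Fin n → ℝ)))) t :=
      (pairCLM n).hasFDerivAt.comp t h2
    exact hc.clm_apply (hasFDerivAt_id t)
  -- continuity of everything in sight
  have hcont_h : Continuous h := hh.continuous
  have hcont_dh : Continuous (fderiv ℝ h) := hh.continuous_fderiv one_ne_zero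
  have hcont_F : ∀ t, Continuous (fun s => F t s) := by
    intro t
    exact ((pairCLM n).continuous.comp
      (hcont_h.comp (continuous_id.smul continuous_const))).clm_apply continuous_const
  have hcont_F' : Continuous (fun p : (Fin n → ℝ) × ℝ => F' p.1 p.2) := by
    have c1 : Continuous fun p : (Fin n → ℝ) × ℝ => p.2 • p.1 := continuous_snd.smul continuous_fst
    have c2 : Continuous fun p : (Fin n → ℝ) × ℝ =>
        (pairCLM n (h (p.2 • p.1))).comp (ContinuousLinearMap.id ℝ (Fin n → ℝ)) :=
      ((pairCLM n).continuous.comp (hcont_h.comp c1)).clm_comp continuous_const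
    have c3 : Continuous fun p : (Fin n → ℝ) × ℝ =>
        p.2 • ContinuousLinearMap.id ℝ (Fin n → ℝ) := continuous_snd.smul continuous_const
    have c4 : Continuous fun p : (Fin n → ℝ) × ℝ =>
        ((pairCLM n).comp
          ((fderiv ℝ h (p.2 • p.1)).comp (p.2 • ContinuousLinearMap.id ℝ (Fin n → ℝ)))) :=
      continuous_const.clm_comp ((hcont_dh.comp c1).clm_comp c3)
    have c5 : Continuous fun p : (Fin n → ℝ) × ℝ =>
        ((pairCLM n).comp
          ((fderiv ℝ h (p.2 • p.1)).comp
            (p.2 • ContinuousLinearMap.id ℝ (Fin n → ℝ)))).flip :=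
      (ContinuousLinearMap.flipₗᵢ ℝ (Fin n → ℝ) (Fin n → ℝ) ℝ).continuous.comp c4
    exact c2.add (c5.clm_apply continuous_fst)
  -- the Fréchet derivative of g
  have hgHas : ∀ t : Fin n → ℝ, HasFDerivAt g (pairCLM n (h t)) t := by
    intro t
    -- bound on a compact neighbourhood
    obtain ⟨C, hC⟩ := (((isCompact_closedBall t 1).prod (isCompact_Icc (a := (0:ℝ)) (b := 1))).exists_bound_of_continuousOn
      hcont_F'.continuousOn)
    have hballIcc : ∀ s ∈ Set.Ioc (0:ℝ) 1, ∀ u ∈ Metric.ball t 1,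
        ‖F' u s‖ ≤ C := by
      intro s hs u hu
      exact hC (u, s) ⟨Metric.ball_subset_closedBall hu, Set.Ioc_subset_Icc_self hs⟩
    have hmain : HasFDerivAt (fun u => ∫ s, F u s ∂μ) (∫ s, F' t s ∂μ) t := by
      apply hasFDerivAt_integral_of_dominated_of_fderiv_le (F' := F') (bound := fun _ => C)
        (s := Metric.ball t 1) (Metric.ball_mem_nhds t one_pos)
      · exact Filter.Eventually.of_forall fun u => (hcont_F u).aestronglyMeasurable
      · exact (hcont_F t).integrableOn_Ioc
      · exact (hcont_F'.comp (Continuous.prodMk_right t)).aestronglyMeasurable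
      · exact (ae_restrict_mem measurableSet_Ioc).mono fun s hs u hu => hballIcc s hs u hu
      · exact integrableOn_const measure_Ioc_lt_top.ne
      · exact Filter.Eventually.of_forall fun s u _ => hFt s u
    -- identify the derivative
    have hF'int : Integrable (fun s => F' t s) μ :=
      ((hcont_F'.comp (Continuous.prodMk_right t)).integrableOn_Ioc)
    have heval : (∫ s, F' t s ∂μ) = pairCLM n (h t) := by
      refine clm_ext_basis fun i => ?_
      rw [ContinuousLinearMap.integral_apply hF'int]
      have e1 : ∀ s : ℝ, ∀ j : Fin n,
          (fderiv ℝ h (s • t)) (s • (Pi.single i 1 : Fin n → ℝ)) j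
            = s * fderiv ℝ (fun y => h y i) (s • t) (Pi.single j 1) := by
        intro s j
        rw [_root_.map_smul]
        calc (s • (fderiv ℝ h (s • t)) (Pi.single i 1)) j
            = s * (fderiv ℝ h (s • t)) (Pi.single i 1) j := rfl
          _ = s * fderiv ℝ (fun y => h y j) (s • t) (Pi.single i 1) := by
              rw [hfderiv_h_apply (s • t) (Pi.single i 1) j]
          _ = s * fderiv ℝ (fun y => h y i) (s • t) (Pi.single j 1) := by
              rw [hsymh (s • t) j i]
      have hFval : ∀ s : ℝ, F' t s (Pi.single i 1)
          = h (s • t) i + s * fderiv ℝ (fun y => h y i) (s • t) t := by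
        intro s
        simp only [hF', ContinuousLinearMap.add_apply, ContinuousLinearMap.comp_apply,
          ContinuousLinearMap.coe_id', id_eq, ContinuousLinearMap.flip_apply,
          pairCLM_single]
        congr 1
        calc pairCLM n ((fderiv ℝ h (s • t)) (s • (Pi.single i 1 : Fin n → ℝ))) t
            = ∑ j, (s * fderiv ℝ (fun y => h y i) (s • t) (Pi.single j 1)) * t j := by
              rw [pairCLM_apply]
              exact Finset.sum_congr rfl fun j _ => by rw [e1 s j]
          _ = s * fderiv ℝ (fun y => h y i) (s • t) t := by
              rw [clm_apply_eq_sum (fderiv ℝ (fun y => h y i) (s • t)) t, Finset.mul_sum]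
              exact Finset.sum_congr rfl fun j _ => by
                simp only [smul_eq_mul]; ring
      have hD : ∀ s : ℝ, HasDerivAt (fun s : ℝ => s * h (s • t) i)
          (h (s • t) i + s * fderiv ℝ (fun y => h y i) (s • t) t) s := by
        intro s
        have hcurve : HasDerivAt (fun s : ℝ => s • t) t s := by
          simpa using (hasDerivAt_id s).smul_const t
        have hin : HasDerivAt (fun s : ℝ => h (s • t) i)
            (fderiv ℝ (fun y => h y i) (s • t) t) s :=
          HasFDerivAt.comp_hasDerivAt (l := fun y => h y i) s (hdhi i (s • t)).hasFDerivAt hcurve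
        have hm := (hasDerivAt_id s).mul hin
        simp only [id_eq, one_mul] at hm
        exact hm
      have hcontD : Continuous
          (fun s : ℝ => h (s • t) i + s * fderiv ℝ (fun y => h y i) (s • t) t) := by
        have hc1 : Continuous fun s : ℝ => s • t := continuous_id.smul continuous_const
        have hcd : Continuous (fderiv ℝ (fun y => h y i)) :=
          (contDiff_pi.mp hh i).continuous_fderiv one_ne_zero
        exact ((continuous_apply i).comp (hcont_h.comp hc1)).add
          (continuous_id.mul ((hcd.comp hc1).clm_apply continuous_const))
      have hFTC : ∫ s, (h (s • t) i + s * fderiv ℝ (fun y => h y i) (s • t) t) ∂μ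
          = h t i := by
        have hkey := intervalIntegral.integral_eq_sub_of_hasDerivAt (a := (0:ℝ)) (b := 1)
          (f := fun s : ℝ => s * h (s • t) i) (fun s _ => hD s)
          (hcontD.intervalIntegrable 0 1)
        rw [intervalIntegral.integral_of_le zero_le_one] at hkey
        rw [hμ]
        rw [hkey]
        simp
      rw [integral_congr_ae (Filter.Eventually.of_forall fun s => hFval s), hFTC,
        pairCLM_single]
    rw [heval] at hmain
    exact hmain
  have hgfd : ∀ t, fderiv ℝ g t = pairCLM n (h t) := fun t => (hgHas t).fderiv
  refine ⟨g, ∑ j : Fin (n+1), f 0 j, ?_, ?_, ?_⟩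
  · have h2 : (2 : WithTop ℕ∞) = 1 + 1 := by norm_num
    rw [h2, contDiff_succ_iff_fderiv]
    refine ⟨fun t => (hgHas t).differentiableAt, by simp, ?_⟩
    have : (fderiv ℝ g) = fun t => pairCLM n (h t) := funext hgfd
    rw [this]
    exact (pairCLM n).contDiff.comp hh
  · intro x i
    rw [hfe x i,
      show (fun j : Fin n => x j.castSucc - x (Fin.last n)) = dCLM n x from
        funext fun j => (dCLM_apply x j).symm,
      hgfd, pairCLM_single]
  · intro x
    have hx := hsum_const x
    rw [Fin.sum_univ_castSucc] at hx
    linarith [hx]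

lemma backward (n : ℕ) (f : (Fin (n + 1) → ℝ) → Fin (n + 1) → ℝ)
    (hf : ContDiff ℝ 1 f) (g : (Fin n → ℝ) → ℝ) (k : ℝ) (hg : ContDiff ℝ 2 g)
    (hgrad : ∀ (x : Fin (n + 1) → ℝ) (i : Fin n),
      f x i.castSucc =
        fderiv ℝ g (fun j : Fin n => x j.castSucc - x (Fin.last n)) (Pi.single i 1))
    (hlast : ∀ x : Fin (n + 1) → ℝ,
      f x (Fin.last n) = -(∑ i : Fin n, f x i.castSucc) + k) :
    IsLaplacianMap f := by
  set G := fderiv ℝ g with hGdef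
  have hg' : ContDiff ℝ ((1 : ℕ∞) + 1) g := by
    exact_mod_cast hg
  have hG1 : ContDiff ℝ 1 G := by
    rw [contDiff_succ_iff_fderiv] at hg'
    exact hg'.2.2
  have hgdiff : ∀ y, HasFDerivAt g (G y) y :=
    fun y => ((hg.differentiable (by norm_num)) y).hasFDerivAt
  have hGder : ∀ y, HasFDerivAt G (fderiv ℝ G y) y :=
    fun y => ((hG1.differentiable one_ne_zero) y).hasFDerivAt
  have dpt : ∀ x : Fin (n+1) → ℝ,
      (fun j : Fin n => x j.castSucc - x (Fin.last n)) = dCLM n x := by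
    intro x; funext j; simp
  -- derivative of the first n components
  have hcomp : ∀ (i : Fin n) (x : Fin (n+1) → ℝ),
      HasFDerivAt (fun y => f y i.castSucc)
        ((ContinuousLinearMap.apply ℝ ℝ (Pi.single i 1)).comp
          ((fderiv ℝ G (dCLM n x)).comp (dCLM n))) x := by
    intro i x
    have heq : (fun y => f y i.castSucc) = fun y => G (dCLM n y) (Pi.single i 1) := by
      funext y; rw [hgrad y i, dpt]
    rw [heq]
    have h1 : HasFDerivAt (fun y => G (dCLM n y)) ((fderiv ℝ G (dCLM n x)).comp (dCLM n)) x :=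
      (hGder (dCLM n x)).comp x (dCLM n).hasFDerivAt
    exact (ContinuousLinearMap.apply ℝ ℝ (Pi.single i 1)).hasFDerivAt.comp x h1
  have P : ∀ (i : Fin n) (x : Fin (n+1) → ℝ) (v : Fin (n+1) → ℝ),
      fderiv ℝ (fun y => f y i.castSucc) x v
        = fderiv ℝ G (dCLM n x) (dCLM n v) (Pi.single i 1) := by
    intro i x v
    rw [(hcomp i x).fderiv]
    rfl
  have hlastD : ∀ x : Fin (n+1) → ℝ,
      HasFDerivAt (fun y => f y (Fin.last n))
        (-(∑ i : Fin n, (ContinuousLinearMap.apply ℝ ℝ (Pi.single i 1)).comp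
          ((fderiv ℝ G (dCLM n x)).comp (dCLM n)))) x := by
    intro x
    have heq : (fun y => f y (Fin.last n))
        = fun y => -(∑ i : Fin n, f y i.castSucc) + k := funext hlast
    rw [heq]
    exact ((HasFDerivAt.fun_sum (fun i _ => hcomp i x)).neg).add_const k
  have Plast : ∀ (x v : Fin (n+1) → ℝ),
      fderiv ℝ (fun y => f y (Fin.last n)) x v
        = -∑ i : Fin n, fderiv ℝ (fun y => f y i.castSucc) x v := by
    intro x v
    rw [(hlastD x).fderiv]
    simp only [ContinuousLinearMap.neg_apply, ContinuousLinearMap.sum_apply]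
    congr 1
    refine Finset.sum_congr rfl fun i _ => ?_
    rw [P i x v]
    rfl
  refine ⟨hf, fun x => ?_⟩
  set S := fderiv ℝ G (dCLM n x) with hS
  have Ssymm : ∀ v w, S v w = S w v :=
    fun v w => second_derivative_symmetric hgdiff (hGder (dCLM n x)) v w
  have key1 : ∀ i j : Fin n,
      fderiv ℝ (fun y => f y i.castSucc) x (Pi.single j.castSucc 1)
        = S (Pi.single j 1) (Pi.single i 1) := by
    intro i j; rw [P, dCLM_single_castSucc]
  have key2 : ∀ i : Fin n,
      fderiv ℝ (fun y => f y i.castSucc) x (Pi.single (Fin.last n) 1)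
        = -∑ j : Fin n, S (Pi.single j 1) (Pi.single i 1) := by
    intro i
    rw [P, dCLM_single_last]
    rw [show (-fun _ : Fin n => (1:ℝ)) = -∑ j, Pi.single j 1 by rw [← one_eq_sum_single]]
    simp only [map_neg, map_sum, ContinuousLinearMap.neg_apply, ContinuousLinearMap.sum_apply]
    rfl
  constructor
  · intro i j
    induction i using Fin.lastCases with
    | last =>
      induction j using Fin.lastCases with
      | last => rfl
      | cast j =>
        rw [Plast, key2 j]
        congr 1
        exact Finset.sum_congr rfl fun i _ => by rw [key1 i j]; exact Ssymm _ _
    | cast i =>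
      induction j using Fin.lastCases with
      | last =>
        rw [Plast, key2 i]
        congr 1
        exact Finset.sum_congr rfl fun j _ => by rw [key1 j i]; exact Ssymm _ _
      | cast j =>
        rw [key1 i j, key1 j i, Ssymm]
  · have rowc : ∀ i : Fin n,
        ∑ j : Fin (n+1), fderiv ℝ (fun y => f y i.castSucc) x (Pi.single j 1) = 0 := by
      intro i
      rw [Fin.sum_univ_castSucc]
      simp only [key1, key2]
      rw [add_neg_eq_zero]
    intro i
    induction i using Fin.lastCases with
    | last =>
      simp only [Plast]
      simp only [← Finset.sum_neg_distrib]
      rw [Finset.sum_comm]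
      refine Finset.sum_eq_zero fun i _ => ?_
      rw [Finset.sum_neg_distrib, rowc i, neg_zero]
    | cast i => exact rowc i

/-- Characterization of Laplacian maps: `f` is Laplacian iff there is a C² function `g` on
`ℝ^n` and a constant `k` with `f_i(x) = ∂g/∂t_i (x₁ - x_{n+1}, …, x_n - x_{n+1})` for
`i = 1, …, n` and `f_{n+1} = -f_1 - ⋯ - f_n + k`. -/
theorem stmt_1 (n : ℕ) (f : (Fin (n + 1) → ℝ) → Fin (n + 1) → ℝ)
    (hf : ContDiff ℝ 1 f) :
    IsLaplacianMap f ↔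
      ∃ (g : (Fin n → ℝ) → ℝ) (k : ℝ), ContDiff ℝ 2 g ∧
        (∀ (x : Fin (n + 1) → ℝ) (i : Fin n),
          f x i.castSucc =
            fderiv ℝ g (fun j : Fin n => x j.castSucc - x (Fin.last n)) (Pi.single i 1)) ∧
        (∀ x : Fin (n + 1) → ℝ,
          f x (Fin.last n) = -(∑ i : Fin n, f x i.castSucc) + k) := by
  constructor
  · intro hLap
    exact forward n f hf hLap
  · rintro ⟨g, k, hg, h1, h2⟩
    exact backward n f hf g k hg h1 h2

end
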